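/- In $\mathbb{Z}[\mu]/\Phi_{2p}(\mu)$ ($p$ odd prime, $\Phi_{2p}$ the $2p$-th cyclotomic polynomial), the complete homogeneous symmetric polynomials $h_i$ evaluated at the $p$ elements $\mu^p, \mu^{p-2}, \ldots, \mu^{2-p}$ vanish for $1 \le i \le p-1$. -/

import Mathlib

set_option maxHeartbeats 1000000


/-- `R = ℤ[μ]/Φ_{2p}(μ)`. -/
abbrev CycRing (p : ℕ) : Type :=
  Polynomial ℤ ⧸ Ideal.span {Polynomial.cyclotomic (2 * p) ℤ}

/-- in `ℤ[μ]/Φ_{2p}(μ)` (`p` an odd prime), the complete homogeneous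
symmetric polynomials `h_i` (in `p` variables) evaluated at the `p` elements
`μ^p, μ^{p-2}, …, μ^{2-p}` vanish for `1 ≤ i ≤ p - 1`.  Here
`h_i(x) = ∑_{d : Fin p → ℕ, ∑ d = i} ∏_t x_t ^ d_t`. -/
theorem stmt11 (p : ℕ) [Fact p.Prime] (hp : Odd p) :
    ∃ u : (CycRing p)ˣ,
      (u : CycRing p) = Ideal.Quotient.mk _ (Polynomial.X : Polynomial ℤ) ∧
      ∀ i : ℕ, 1 ≤ i → i ≤ p - 1 →
        (∑ d ∈ Finset.Nat.antidiagonalTuple p i,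
          ∏ t : Fin p,
            ((u ^ ((p : ℤ) - 2 * (t : ℤ)) : (CycRing p)ˣ) : CycRing p) ^ d t) = 0 := by
  classical
  have hp2 : 2 ≤ p := (Fact.out : p.Prime).two_le
  obtain ⟨n, rfl⟩ : ∃ n, p = n + 1 := ⟨p - 1, by omega⟩
  set π : Polynomial ℤ →+* CycRing (n + 1) := Ideal.Quotient.mk _ with hπ
  set z : CycRing (n + 1) := π Polynomial.X with hzdef
  -- z ^ (2(n+1)) = 1
  have hz : z ^ (2 * (n + 1)) = 1 := by
    have h0 : π (Polynomial.X ^ (2 * (n + 1)) - 1) = 0 := by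
      rw [hπ, Ideal.Quotient.eq_zero_iff_mem, Ideal.mem_span_singleton]
      exact Polynomial.cyclotomic.dvd_X_pow_sub_one (2 * (n + 1)) ℤ
    have h1 : z ^ (2 * (n + 1)) - 1 = 0 := by
      simpa [map_sub, map_pow, map_one] using h0
    exact sub_eq_zero.mp h1
  -- the unit
  refine ⟨⟨z, z ^ (2 * (n + 1) - 1), ?_, ?_⟩, rfl, ?_⟩
  · calc z * z ^ (2 * (n + 1) - 1) = z ^ (2 * (n + 1) - 1 + 1) := (pow_succ' z _).symm
    _ = 1 := by rw [show 2 * (n + 1) - 1 + 1 = 2 * (n + 1) by omega]; exact hz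
  · calc z ^ (2 * (n + 1) - 1) * z = z ^ (2 * (n + 1) - 1 + 1) := (pow_succ z _).symm
    _ = 1 := by rw [show 2 * (n + 1) - 1 + 1 = 2 * (n + 1) by omega]; exact hz
  set u : (CycRing (n + 1))ˣ := ⟨z, z ^ (2 * (n + 1) - 1), _, _⟩ with hudef
  -- Domain instance
  have hirr : Irreducible (Polynomial.cyclotomic (2 * (n + 1)) ℤ) :=
    Polynomial.cyclotomic.irreducible (by omega)
  haveI hprime : (Ideal.span {Polynomial.cyclotomic (2 * (n + 1)) ℤ}).IsPrime := by
    rw [Ideal.span_singleton_prime hirr.ne_zero]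
    exact hirr.prime
  haveI : IsDomain (CycRing (n + 1)) := Ideal.Quotient.isDomain _
  -- NeZero for the cast of 2(n+1)
  haveI : NeZero ((2 * (n + 1) : ℕ) : CycRing (n + 1)) := by
    constructor
    intro h
    have hmem : ((2 * (n + 1) : ℕ) : Polynomial ℤ)
        ∈ Ideal.span {Polynomial.cyclotomic (2 * (n + 1)) ℤ} := by
      rw [← Ideal.Quotient.eq_zero_iff_mem]
      rw [map_natCast]; exact h
    rw [Ideal.mem_span_singleton] at hmem
    have hne : ((2 * (n + 1) : ℕ) : Polynomial ℤ) ≠ 0 :=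
      Nat.cast_ne_zero.mpr (by omega)
    have := Polynomial.natDegree_le_of_dvd hmem hne
    rw [Polynomial.natDegree_cyclotomic, Polynomial.natDegree_natCast] at this
    have := Nat.totient_pos.mpr (show 0 < 2 * (n + 1) by omega)
    omega
  -- z is a primitive 2(n+1)-th root of unity
  have hroot : (Polynomial.cyclotomic (2 * (n + 1)) (CycRing (n + 1))).IsRoot z := by
    have h1 : π (Polynomial.cyclotomic (2 * (n + 1)) ℤ) = 0 := by
      rw [hπ, Ideal.Quotient.eq_zero_iff_mem]
      exact Ideal.subset_span rfl
    have h2 : π ((Polynomial.cyclotomic (2 * (n + 1)) ℤ).eval₂ Polynomial.C Polynomial.X)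
        = (Polynomial.cyclotomic (2 * (n + 1)) ℤ).eval₂ (π.comp Polynomial.C) z :=
      Polynomial.hom_eval₂ _ _ _ _
    rw [Polynomial.eval₂_C_X, h1] at h2
    have h3 : π.comp Polynomial.C = Int.castRingHom (CycRing (n + 1)) := RingHom.ext_int _ _
    rw [h3] at h2
    rw [Polynomial.IsRoot,
      ← Polynomial.map_cyclotomic (2 * (n + 1)) (Int.castRingHom (CycRing (n + 1))),
      Polynomial.eval_map]
    exact h2.symm
  have hprim : IsPrimitiveRoot z (2 * (n + 1)) := Polynomial.isRoot_cyclotomic_iff.mp hroot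
  -- unit power congruence
  have hu2p : u ^ (2 * (n + 1)) = 1 := by
    ext
    push_cast
    exact hz
  have hcong : ∀ a b : ℤ, ((2 * (n + 1) : ℤ) ∣ a - b) → u ^ a = u ^ b := by
    intro a b ⟨k, hk⟩
    have ha : a = b + 2 * (n + 1) * k := by linarith
    rw [ha, zpow_add, zpow_mul]
    have h1 : u ^ ((2 : ℤ) * (n + 1)) = 1 := by
      rw [show ((2 : ℤ) * (n + 1)) = ((2 * (n + 1) : ℕ) : ℤ) by push_cast; ring,
        zpow_natCast, hu2p]
    rw [h1, one_zpow, mul_one]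
  -- main part
  intro i hi1 hi2
  set x : Fin (n + 1) → (CycRing (n + 1))ˣ :=
    fun t => u ^ (((n + 1 : ℕ) : ℤ) - 2 * ((t : ℕ) : ℤ)) with hxdef
  set T := Finset.Nat.antidiagonalTuple (n + 1) i with hT
  set S : CycRing (n + 1) := ∑ d ∈ T, ∏ t, ((x t : CycRing (n + 1))) ^ d t with hS
  show S = 0
  have hshift : ∀ s : Fin (n + 1), x (s - 1) = u ^ (2 : ℤ) * x s := by
    intro s
    rw [hxdef]
    simp only
    rw [← zpow_add]
    apply hcong
    rcases eq_or_ne s 0 with h0 | h0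
    · subst h0
      have hv : ((0 - 1 : Fin (n + 1)) : ℕ) = n := by
        rw [Fin.coe_sub_one]; simp
      rw [hv]
      refine ⟨-1, ?_⟩
      push_cast [Fin.val_zero]
      ring
    · have hv : ((s - 1 : Fin (n + 1)) : ℕ) = (s : ℕ) - 1 := by
        rw [Fin.coe_sub_one, if_neg h0]
      have hs1 : 1 ≤ (s : ℕ) := by
        rcases Nat.eq_zero_or_pos (s : ℕ) with h | h
        · exact absurd (Fin.ext h) h0
        · exact h
      refine ⟨0, ?_⟩
      rw [hv]
      push_cast [hs1]
      ring
  -- S = u^(2i) * S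
  have key : S = ((u : CycRing (n + 1))) ^ (2 * i) * S := by
    have step1 : S = ∑ d ∈ T, ∏ t, ((x (t - 1) : CycRing (n + 1))) ^ d t := by
      rw [hS]
      refine Finset.sum_nbij' (fun d => fun t => d (t - 1)) (fun d => fun t => d (t + 1))
        ?_ ?_ ?_ ?_ ?_
      · intro d hd
        rw [hT, Finset.Nat.mem_antidiagonalTuple] at hd ⊢
        rw [← hd]
        exact Equiv.sum_comp (Equiv.subRight (1 : Fin (n + 1))) d
      · intro d hd
        rw [hT, Finset.Nat.mem_antidiagonalTuple] at hd ⊢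
        rw [← hd]
        exact Equiv.sum_comp (Equiv.addRight (1 : Fin (n + 1))) d
      · intro d _; funext t; simp
      · intro d _; funext t; simp
      · intro d _
        exact (Equiv.prod_comp (Equiv.subRight (1 : Fin (n + 1)))
          (fun t => ((x t : CycRing (n + 1))) ^ d t)).symm
    have step2 : ∀ d ∈ T, ∏ t, ((x (t - 1) : CycRing (n + 1))) ^ d t
        = ((u : CycRing (n + 1))) ^ (2 * i) * ∏ t, ((x t : CycRing (n + 1))) ^ d t := by
      intro d hd
      rw [hT, Finset.Nat.mem_antidiagonalTuple] at hd
      have hterm : ∀ t : Fin (n + 1), ((x (t - 1) : CycRing (n + 1))) ^ d t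
          = (((u : CycRing (n + 1))) ^ 2) ^ d t * ((x t : CycRing (n + 1))) ^ d t := by
        intro t
        have h2 : u ^ (2 : ℤ) = u ^ (2 : ℕ) := by
          rw [← zpow_natCast]; norm_num
        rw [hshift t, h2, Units.val_mul, Units.val_pow_eq_pow_val, mul_pow]
      rw [Finset.prod_congr rfl (fun t _ => hterm t), Finset.prod_mul_distrib,
        Finset.prod_pow_eq_pow_sum, hd, ← pow_mul]
    calc S = ∑ d ∈ T, ∏ t, ((x (t - 1) : CycRing (n + 1))) ^ d t := step1
    _ = ∑ d ∈ T, ((u : CycRing (n + 1))) ^ (2 * i) * ∏ t, ((x t : CycRing (n + 1))) ^ d t :=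
      Finset.sum_congr rfl step2
    _ = ((u : CycRing (n + 1))) ^ (2 * i) * S := by rw [← Finset.mul_sum]
  have hne : ((u : CycRing (n + 1))) ^ (2 * i) ≠ 1 := by
    have h1 : (u : CycRing (n + 1)) = z := rfl
    rw [h1]
    exact hprim.pow_ne_one_of_pos_of_lt (by omega) (by omega)
  have hzero : (1 - ((u : CycRing (n + 1))) ^ (2 * i)) * S = 0 := by
    rw [sub_mul, one_mul, ← key, sub_self]
  rcases mul_eq_zero.mp hzero with h | h
  · exact absurd (sub_eq_zero.mp h).symm hne
  · exact h
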